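/- The block circulant operator intertwines generalized tensor and generalized matrix functions: for any A ∈ C^{m×n×p} and odd scalar function f, f^◇(bcirc(A)) = bcirc(f^◇(A)), where on the left f^◇ is the generalized matrix function (defined via the matrix SVD) applied to the mp×np matrix bcirc(A). -/

import Mathlib

open Matrix Kronecker
open scoped ComplexOrder

namespace TProd

/-- A third-order tensor with `p` frontal slices, each a matrix indexed by `ι × κ`. -/
abbrev Tensor (ι κ : Type) (p : ℕ) := Fin p → Matrix ι κ ℂ

variable {p : ℕ} [NeZero p]

/-- Block circulant matrix of a tensor: block `(i,j)` is the frontal slice `A (i - j)`. -/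
def bcirc {ι κ : Type} (A : Tensor ι κ p) : Matrix (Fin p × ι) (Fin p × κ) ℂ :=
  Matrix.of fun ik jl => A (ik.1 - jl.1) ik.2 jl.2

/-- Stack the frontal slices vertically. -/
def tunfold {ι κ : Type} (A : Tensor ι κ p) : Matrix (Fin p × ι) κ ℂ :=
  Matrix.of fun ik j => A ik.1 ik.2 j

/-- Inverse of `tunfold`. -/
def tfold {ι κ : Type} (M : Matrix (Fin p × ι) κ ℂ) : Tensor ι κ p :=
  fun k => Matrix.of fun a b => M (k, a) b

/-- The T-product `A * B := fold (bcirc A · unfold B)`. -/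
noncomputable def tprod {ι κ μ : Type} [Fintype κ] (A : Tensor ι κ p) (B : Tensor κ μ p) :
    Tensor ι μ p :=
  tfold (bcirc A * tunfold B)

/-- Tensor conjugate transpose: conjugate-transpose each slice and reverse slices 2..p. -/
def tconjT {ι κ : Type} (A : Tensor ι κ p) : Tensor κ ι p := fun k => (A (-k))ᴴ

/-- Tensor transpose: transpose each slice and reverse slices 2..p. -/
def ttransp {ι κ : Type} (A : Tensor ι κ p) : Tensor κ ι p := fun k => (A (-k))ᵀ

/-- The identity tensor: identity first frontal slice, other slices zero. -/
def tid (ι : Type) [DecidableEq ι] (p : ℕ) [NeZero p] : Tensor ι ι p :=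
  fun k => if k = 0 then 1 else 0

/-- Left inverse of `bcirc`: extract the first block column. -/
def bcircInv {ι κ : Type} (M : Matrix (Fin p × ι) (Fin p × κ) ℂ) : Tensor ι κ p :=
  fun k => Matrix.of fun a b => M (k, a) ((0 : Fin p), b)

/-- The unitary discrete Fourier matrix of size `p`. -/
noncomputable def Fmat (p : ℕ) : Matrix (Fin p) (Fin p) ℂ :=
  Matrix.of fun j k =>
    Complex.exp (-(2 * Real.pi * Complex.I * (j : ℕ) * (k : ℕ)) / p) / (Real.sqrt p : ℂ)

/-- Fourier-domain block diagonalization `(F_pᴴ ⊗ I) · bcirc A · (F_p ⊗ I)`. -/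
noncomputable def fblocks {ι κ : Type} [Fintype ι] [Fintype κ] [DecidableEq ι] [DecidableEq κ]
    (A : Tensor ι κ p) : Matrix (Fin p × ι) (Fin p × κ) ℂ :=
  ((Fmat p)ᴴ ⊗ₖ (1 : Matrix ι ι ℂ)) * bcirc A * (Fmat p ⊗ₖ (1 : Matrix κ κ ℂ))

/-- `S` is F-diagonal: Fourier blocks are (generalized) diagonal with nonnegative real
entries. -/
def IsFDiag {ι κ : Type} [Fintype ι] [Fintype κ] [DecidableEq ι] [DecidableEq κ]
    (S : Tensor ι κ p) : Prop :=
  (∀ i j a b, fblocks S (i, a) (j, b) ≠ 0 → i = j) ∧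
  (∀ x y y', fblocks S x y ≠ 0 → fblocks S x y' ≠ 0 → y = y') ∧
  (∀ x x' y, fblocks S x y ≠ 0 → fblocks S x' y ≠ 0 → x = x') ∧
  (∀ x y, 0 ≤ (fblocks S x y).re ∧ (fblocks S x y).im = 0)

/-- A tensor `Q` is unitary for the T-product. -/
def IsTUnitary {ι : Type} [Fintype ι] [DecidableEq ι] (Q : Tensor ι ι p) : Prop :=
  tprod (tconjT Q) Q = tid ι p ∧ tprod Q (tconjT Q) = tid ι p

/-- `(U, S, V)` is a T-SVD of `A`. -/
def IsTSVD {ι κ : Type} [Fintype ι] [Fintype κ] [DecidableEq ι] [DecidableEq κ]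
    (A : Tensor ι κ p) (U : Tensor ι ι p) (S : Tensor ι κ p) (V : Tensor κ κ p) : Prop :=
  IsTUnitary U ∧ IsTUnitary V ∧ IsFDiag S ∧ A = tprod U (tprod S (tconjT V))

/-- Apply a scalar function to the singular values of an F-diagonal tensor. -/
noncomputable def fhat {ι κ : Type} [Fintype ι] [Fintype κ] [DecidableEq ι] [DecidableEq κ]
    (f : ℂ → ℂ) (S : Tensor ι κ p) : Tensor ι κ p :=
  bcircInv ((Fmat p ⊗ₖ (1 : Matrix ι ι ℂ)) * (fblocks S).map f *
    ((Fmat p)ᴴ ⊗ₖ (1 : Matrix κ κ ℂ)))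

open Classical in
/-- The generalized tensor function induced by the scalar function `f` via the T-SVD. -/
noncomputable def gtf {ι κ : Type} [Fintype ι] [Fintype κ] [DecidableEq ι] [DecidableEq κ]
    (f : ℂ → ℂ) (A : Tensor ι κ p) : Tensor ι κ p :=
  if h : ∃ t : Tensor ι ι p × Tensor ι κ p × Tensor κ κ p, IsTSVD A t.1 t.2.1 t.2.2 then
    tprod h.choose.1 (tprod (fhat f h.choose.2.1) (tconjT h.choose.2.2))
  else 0

/-- An odd scalar function. -/
def OddFn (f : ℂ → ℂ) : Prop := ∀ z, f (-z) = -f z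

open Classical in
/-- The Moore–Penrose inverse of a matrix. -/
noncomputable def mpinv {ι κ : Type} [Fintype ι] [Fintype κ] (M : Matrix ι κ ℂ) :
    Matrix κ ι ℂ :=
  if h : ∃ N : Matrix κ ι ℂ,
      M * N * M = M ∧ N * M * N = N ∧ (M * N)ᴴ = M * N ∧ (N * M)ᴴ = N * M then
    h.choose
  else 0

/-- The Moore–Penrose inverse of a tensor: `A^† := bcirc⁻¹ ((bcirc A)^†)`. -/
noncomputable def tpinv {ι κ : Type} [Fintype ι] [Fintype κ] (A : Tensor ι κ p) :
    Tensor κ ι p :=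
  bcircInv (mpinv (bcirc A))

open Classical in
/-- Matrix function of a Hermitian matrix via the spectral theorem. -/
noncomputable def hermFun {ι : Type} [Fintype ι] [DecidableEq ι] (f : ℂ → ℂ)
    (M : Matrix ι ι ℂ) : Matrix ι ι ℂ :=
  if h : M.IsHermitian then
    (h.eigenvectorUnitary : Matrix ι ι ℂ) *
      Matrix.diagonal (fun i => f ((h.eigenvalues i : ℝ) : ℂ)) *
      (h.eigenvectorUnitary : Matrix ι ι ℂ)ᴴ
  else 0

open Classical in
/-- Square root of a positive semidefinite matrix. -/
noncomputable def msqrt {ι : Type} [Fintype ι] [DecidableEq ι] (M : Matrix ι ι ℂ) :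
    Matrix ι ι ℂ :=
  if h : M.PosSemidef then
    (h.1.eigenvectorUnitary : Matrix ι ι ℂ) *
      Matrix.diagonal (fun i => ((Real.sqrt (h.1.eigenvalues i) : ℝ) : ℂ)) *
      (star (h.1.eigenvectorUnitary : Matrix ι ι ℂ))
  else 0

/-- The standard tensor T-function (here used on Hermitian tensors). -/
noncomputable def stdTf {ι : Type} [Fintype ι] [DecidableEq ι] (f : ℂ → ℂ)
    (A : Tensor ι ι p) : Tensor ι ι p :=
  bcircInv (hermFun f (bcirc A))

/-- The tensor square root of a (PSD) F-square tensor. -/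
noncomputable def tsqrt {ι : Type} [Fintype ι] [DecidableEq ι] (A : Tensor ι ι p) :
    Tensor ι ι p :=
  bcircInv (msqrt (bcirc A))

/-- 2×2 block tensor, formed by block-concatenating frontal slices. -/
def tblock {ι₁ ι₂ κ₁ κ₂ : Type} (A : Tensor ι₁ κ₁ p) (B : Tensor ι₁ κ₂ p)
    (C : Tensor ι₂ κ₁ p) (D : Tensor ι₂ κ₂ p) : Tensor (ι₁ ⊕ ι₂) (κ₁ ⊕ κ₂) p :=
  fun k => Matrix.fromBlocks (A k) (B k) (C k) (D k)

end TProd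

open TProd Matrix Kronecker

/-- A rectangular matrix is (generalized) diagonal with nonnegative real entries. -/
def IsRectDiag {ι κ : Type} (S : Matrix ι κ ℂ) : Prop :=
  (∀ a b b', S a b ≠ 0 → S a b' ≠ 0 → b = b') ∧
  (∀ a a' b, S a b ≠ 0 → S a' b ≠ 0 → a = a') ∧
  (∀ a b, 0 ≤ (S a b).re ∧ (S a b).im = 0)

/-- `(U, S, V)` is a singular value decomposition of the matrix `M`. -/
def IsMSVD {ι κ : Type} [Fintype ι] [Fintype κ] [DecidableEq ι] [DecidableEq κ]
    (M : Matrix ι κ ℂ) (U : Matrix ι ι ℂ) (S : Matrix ι κ ℂ) (V : Matrix κ κ ℂ) : Prop :=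
  Uᴴ * U = 1 ∧ U * Uᴴ = 1 ∧ Vᴴ * V = 1 ∧ V * Vᴴ = 1 ∧ IsRectDiag S ∧ M = U * S * Vᴴ

open Classical in
/-- The generalized matrix function (Hawkins–Ben-Israel), defined via the matrix SVD
by applying the scalar function to the singular values. -/
noncomputable def gmf {ι κ : Type} [Fintype ι] [Fintype κ] [DecidableEq ι] [DecidableEq κ]
    (f : ℂ → ℂ) (M : Matrix ι κ ℂ) : Matrix ι κ ℂ :=
  if h : ∃ t : Matrix ι ι ℂ × Matrix ι κ ℂ × Matrix κ κ ℂ,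
      IsMSVD M t.1 t.2.1 t.2.2 then
    h.choose.1 * (h.choose.2.1.map f) * h.choose.2.2ᴴ
  else 0


set_option linter.unusedSectionVars false
set_option maxHeartbeats 1000000

namespace TProd
open Matrix Kronecker
variable {p : ℕ} [NeZero p]

noncomputable def zeta (p : ℕ) : ℂ := Complex.exp (2 * Real.pi * Complex.I / p)

lemma zeta_isPrimitiveRoot : IsPrimitiveRoot (zeta p) p :=
  Complex.isPrimitiveRoot_exp p (NeZero.ne p)

lemma conj_zeta : (starRingEnd ℂ) (zeta p) = Complex.exp (-(2 * Real.pi * Complex.I) / p) := by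
  rw [zeta, ← Complex.exp_conj]
  congr 1
  simp [map_div₀, Complex.conj_ofReal, _root_.map_mul, Complex.conj_I, map_ofNat]

lemma zeta_mul_conj : zeta p * (starRingEnd ℂ) (zeta p) = 1 := by
  rw [conj_zeta, zeta, ← Complex.exp_add]
  rw [show 2 * (Real.pi:ℂ) * Complex.I / p + -(2 * Real.pi * Complex.I) / p = 0 by ring]
  exact Complex.exp_zero

lemma zeta_pow_p : (zeta p) ^ p = 1 := (zeta_isPrimitiveRoot (p := p)).pow_eq_one

lemma conj_zeta_pow_p : ((starRingEnd ℂ) (zeta p)) ^ p = 1 := by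
  rw [← map_pow, zeta_pow_p, RingHom.map_one]

lemma pow_val_mod (u : ℂ) (hu : u ^ p = 1) (a : ℕ) : u ^ (a % p) = u ^ a := by
  conv_rhs => rw [← Nat.mod_add_div a p, pow_add, pow_mul, hu, one_pow, mul_one]

lemma Fmat_apply (j k : Fin p) :
    Fmat p j k = ((starRingEnd ℂ) (zeta p)) ^ (j.val * k.val) / (Real.sqrt p : ℂ) := by
  rw [Fmat, Matrix.of_apply, conj_zeta, ← Complex.exp_nat_mul]
  congr 2
  push_cast
  ring

lemma sqrtp_sq : ((Real.sqrt p : ℂ)) * ((Real.sqrt p : ℂ)) = (p : ℂ) := by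
  rw [← Complex.ofReal_mul, Real.mul_self_sqrt (Nat.cast_nonneg p)]
  norm_num

lemma sqrtp_ne_zero : ((Real.sqrt p : ℂ)) ≠ 0 := by
  simp only [ne_eq, Complex.ofReal_eq_zero]
  have : (0:ℝ) < p := by exact_mod_cast Nat.pos_of_ne_zero (NeZero.ne p)
  exact (Real.sqrt_ne_zero'.mpr this)

lemma dft_sum (j l : Fin p) :
    ∑ k : Fin p, (zeta p) ^ (k.val * j.val) * ((starRingEnd ℂ) (zeta p)) ^ (k.val * l.val)
      = if j = l then (p : ℂ) else 0 := by
  set c := (starRingEnd ℂ) (zeta p) with hc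
  set u := (zeta p) ^ j.val * c ^ l.val with hu
  have key : ∀ k : Fin p, (zeta p) ^ (k.val * j.val) * c ^ (k.val * l.val) = u ^ k.val := by
    intro k
    rw [hu, mul_pow, ← pow_mul, ← pow_mul, mul_comm j.val, mul_comm l.val]
  rw [Finset.sum_congr rfl fun k _ => key k, Fin.sum_univ_eq_sum_range (fun k => u ^ k) p]
  by_cases hjl : j = l
  · subst hjl
    have hu1 : u = 1 := by rw [hu, ← mul_pow, zeta_mul_conj, one_pow]
    simp [hu1]
  · have hun : u ≠ 1 := by
      intro h
      have h2 : (zeta p) ^ j.val * (c ^ l.val * (zeta p) ^ l.val) = (zeta p) ^ l.val := by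
        rw [← mul_assoc, ← hu, h, one_mul]
      rw [← mul_pow, mul_comm c, zeta_mul_conj, one_pow, mul_one] at h2
      exact hjl (Fin.ext ((zeta_isPrimitiveRoot (p := p)).pow_inj j.isLt l.isLt h2))
    have hup : u ^ p = 1 := by
      rw [hu, mul_pow, ← pow_mul, mul_comm j.val p, pow_mul, zeta_pow_p, one_pow,
        ← pow_mul, mul_comm l.val p, pow_mul, conj_zeta_pow_p, one_pow, one_mul]
    rw [geom_sum_eq hun p, hup, sub_self, zero_div, if_neg hjl]

lemma pcast_ne_zero : (p : ℂ) ≠ 0 := Nat.cast_ne_zero.mpr (NeZero.ne p)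

lemma Fmat_conjTranspose_mul : (Fmat p)ᴴ * Fmat p = 1 := by
  ext j l
  simp only [Matrix.mul_apply, Matrix.conjTranspose_apply, Fmat_apply, Complex.star_def]
  have key : ∀ k : Fin p,
      (starRingEnd ℂ) (((starRingEnd ℂ) (zeta p)) ^ (k.val * j.val) / (Real.sqrt p : ℂ)) *
        (((starRingEnd ℂ) (zeta p)) ^ (k.val * l.val) / (Real.sqrt p : ℂ))
      = ((zeta p) ^ (k.val * j.val) * ((starRingEnd ℂ) (zeta p)) ^ (k.val * l.val)) * ((p : ℂ))⁻¹ := by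
    intro k
    rw [map_div₀, ← map_pow, Complex.conj_conj, Complex.conj_ofReal, div_mul_div_comm,
      sqrtp_sq, div_eq_mul_inv]
  rw [Finset.sum_congr rfl fun k _ => key k, ← Finset.sum_mul, dft_sum]
  by_cases hjl : j = l
  · rw [if_pos hjl, hjl, Matrix.one_apply_eq, mul_inv_cancel₀ pcast_ne_zero]
  · rw [if_neg hjl, Matrix.one_apply_ne hjl, zero_mul]

lemma Fmat_mul_conjTranspose : Fmat p * (Fmat p)ᴴ = 1 :=
  mul_eq_one_comm.mp Fmat_conjTranspose_mul

lemma Fmat_add_apply (j t k : Fin p) :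
    Fmat p (j + t) k = ((starRingEnd ℂ) (zeta p)) ^ (t.val * k.val) * Fmat p j k := by
  set c := (starRingEnd ℂ) (zeta p) with hc
  have hck : (c ^ k.val) ^ p = 1 := by
    rw [← pow_mul, mul_comm, pow_mul, conj_zeta_pow_p, one_pow]
  rw [Fmat_apply, Fmat_apply]
  have : c ^ ((j + t).val * k.val) = c ^ (t.val * k.val) * c ^ (j.val * k.val) := by
    rw [mul_comm (j+t).val k.val, pow_mul, Fin.val_add, pow_val_mod _ hck, ← pow_mul,
      mul_add, pow_add, mul_comm (k.val) (j.val), mul_comm (k.val) (t.val), mul_comm]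
  rw [this, mul_div_assoc]


section BcircAlg
variable {ι κ μ : Type}

lemma bcircInv_bcirc (A : Tensor ι κ p) : bcircInv (bcirc A) = A := by
  funext k; ext a b; simp [bcircInv, bcirc]

lemma bcirc_inj {A B : Tensor ι κ p} (h : bcirc A = bcirc B) : A = B := by
  rw [← bcircInv_bcirc A, h, bcircInv_bcirc]

def IsBlockCirc (M : Matrix (Fin p × ι) (Fin p × κ) ℂ) : Prop :=
  ∀ t j l a b, M (j + t, a) (l + t, b) = M (j, a) (l, b)

lemma bcirc_bcircInv {M : Matrix (Fin p × ι) (Fin p × κ) ℂ} (hM : IsBlockCirc M) :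
    bcirc (bcircInv M) = M := by
  ext x y
  obtain ⟨j, a⟩ := x; obtain ⟨l, b⟩ := y
  show M (j - l, a) (0, b) = M (j, a) (l, b)
  have h := hM l (j - l) 0 a b
  rw [sub_add_cancel, zero_add] at h
  exact h.symm

lemma isBlockCirc_bcirc (A : Tensor ι κ p) : IsBlockCirc (bcirc A) := by
  intro t j l a b
  show A (j + t - (l + t)) a b = A (j - l) a b
  rw [add_sub_add_right_eq_sub]

lemma bcirc_tprod [Fintype κ] (A : Tensor ι κ p) (B : Tensor κ μ p) :
    bcirc (tprod A B) = bcirc A * bcirc B := by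
  ext x y
  obtain ⟨j, a⟩ := x; obtain ⟨l, b⟩ := y
  show (bcirc A * tunfold B) (j - l, a) b = _
  rw [Matrix.mul_apply, Matrix.mul_apply]
  rw [← Equiv.sum_comp (Equiv.prodCongr (Equiv.addRight l) (Equiv.refl κ))
    (fun x : Fin p × κ => bcirc A (j, a) x * bcirc B x (l, b))]
  apply Finset.sum_congr rfl
  rintro ⟨k, c⟩ -
  show A (j - l - k) a c * B k c b = A (j - (k + l)) a c * B (k + l - l) c b
  rw [add_sub_cancel_right, sub_add_eq_sub_sub, sub_right_comm]

lemma bcirc_tconjT (Q : Tensor ι κ p) : bcirc (tconjT Q) = (bcirc Q)ᴴ := by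
  ext x y
  obtain ⟨j, a⟩ := x; obtain ⟨l, b⟩ := y
  show (Q (-(j - l)))ᴴ a b = star (Q (l - j) b a)
  rw [neg_sub]
  rfl

lemma bcirc_tid [DecidableEq ι] : bcirc (tid ι p) = (1 : Matrix (Fin p × ι) (Fin p × ι) ℂ) := by
  ext x y
  obtain ⟨j, a⟩ := x; obtain ⟨l, b⟩ := y
  show (if j - l = 0 then (1 : Matrix ι ι ℂ) else 0) a b = _
  by_cases h : j = l
  · subst h
    by_cases hab : a = b <;> simp [sub_self, Matrix.one_apply, Prod.ext_iff, hab]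
  · have : ¬ (j - l = 0) := fun hc => h (by rwa [sub_eq_zero] at hc)
    simp [this, Matrix.one_apply, Prod.ext_iff, h]

end BcircAlg

section BDiag
variable {ι κ μ : Type}

/-- Block diagonal matrix with blocks `N j`. -/
def bdiag (N : Fin p → Matrix ι κ ℂ) : Matrix (Fin p × ι) (Fin p × κ) ℂ :=
  Matrix.of fun x y => if x.1 = y.1 then N x.1 x.2 y.2 else 0

lemma bdiag_mul [Fintype κ] (N : Fin p → Matrix ι κ ℂ) (N' : Fin p → Matrix κ μ ℂ) :
    bdiag N * bdiag N' = bdiag (fun j => N j * N' j) := by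
  ext x y
  obtain ⟨j, a⟩ := x; obtain ⟨l, b⟩ := y
  rw [Matrix.mul_apply, Fintype.sum_prod_type]
  show (∑ k : Fin p, ∑ c : κ, (if j = k then N j a c else 0) * (if k = l then N' k c b else 0))
      = (if j = l then (N j * N' j) a b else 0)
  by_cases h : j = l
  · subst h
    rw [if_pos rfl, Matrix.mul_apply]
    rw [Finset.sum_eq_single j (fun k _ hk => Finset.sum_eq_zero fun c _ => by
      rw [if_neg (fun hc => hk hc.symm), zero_mul]) (fun hj => absurd (Finset.mem_univ j) hj)]
    exact Finset.sum_congr rfl fun c _ => by rw [if_pos rfl, if_pos rfl]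
  · rw [if_neg h]
    apply Finset.sum_eq_zero; intro k _
    apply Finset.sum_eq_zero; intro c _
    by_cases hk : j = k
    · subst hk; rw [if_neg h, mul_zero]
    · rw [if_neg hk, zero_mul]

lemma bdiag_conjTranspose (N : Fin p → Matrix ι κ ℂ) :
    (bdiag N)ᴴ = bdiag (fun j => (N j)ᴴ) := by
  ext x y
  obtain ⟨j, a⟩ := x; obtain ⟨l, b⟩ := y
  show star (if l = j then N l b a else 0) = if j = l then star (N j b a) else 0
  by_cases h : j = l
  · subst h; simp
  · simp [h, Ne.symm h]

lemma bdiag_one [DecidableEq ι] : bdiag (fun _ : Fin p => (1 : Matrix ι ι ℂ)) = 1 := by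
  ext x y
  obtain ⟨j, a⟩ := x; obtain ⟨l, b⟩ := y
  show (if j = l then (1 : Matrix ι ι ℂ) a b else 0) = _
  by_cases h : j = l
  · subst h
    by_cases hab : a = b <;> simp [Matrix.one_apply, Prod.ext_iff, hab]
  · simp [h, Matrix.one_apply, Prod.ext_iff]

end BDiag
section FConj
variable {ι κ μ : Type} [Fintype ι] [Fintype κ] [DecidableEq ι] [DecidableEq κ]

lemma kron_one_conjTranspose (M : Matrix (Fin p) (Fin p) ℂ) :
    (M ⊗ₖ (1 : Matrix ι ι ℂ))ᴴ = Mᴴ ⊗ₖ (1 : Matrix ι ι ℂ) := by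
  ext x y
  show star (M y.1 x.1 * (1 : Matrix ι ι ℂ) y.2 x.2)
      = star (M y.1 x.1) * (1 : Matrix ι ι ℂ) x.2 y.2
  rw [star_mul']
  congr 1
  by_cases h : x.2 = y.2
  · rw [h, Matrix.one_apply_eq, star_one]
  · rw [Matrix.one_apply_ne h, Matrix.one_apply_ne (Ne.symm h), star_zero]

lemma FI_conjTranspose_mul :
    (Fmat p ⊗ₖ (1 : Matrix ι ι ℂ))ᴴ * (Fmat p ⊗ₖ (1 : Matrix ι ι ℂ)) = 1 := by
  rw [kron_one_conjTranspose, ← Matrix.mul_kronecker_mul, Fmat_conjTranspose_mul,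
    Matrix.one_mul, Matrix.one_kronecker_one]

lemma FI_mul_conjTranspose :
    (Fmat p ⊗ₖ (1 : Matrix ι ι ℂ)) * (Fmat p ⊗ₖ (1 : Matrix ι ι ℂ))ᴴ = 1 :=
  mul_eq_one_comm.mp FI_conjTranspose_mul

lemma conj_bdiag_apply (N : Fin p → Matrix ι κ ℂ) (j l : Fin p) (a : ι) (b : κ) :
    ((Fmat p ⊗ₖ (1 : Matrix ι ι ℂ)) * bdiag N * (Fmat p ⊗ₖ (1 : Matrix κ κ ℂ))ᴴ) (j, a) (l, b)
      = ∑ k : Fin p, Fmat p j k * star (Fmat p l k) * N k a b := by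
  have h1 : ∀ (k' : Fin p) (c' : κ),
      ((Fmat p ⊗ₖ (1 : Matrix ι ι ℂ)) * bdiag N) (j, a) (k', c') = Fmat p j k' * N k' a c' := by
    intro k' c'
    rw [Matrix.mul_apply, Fintype.sum_prod_type]
    show (∑ k : Fin p, ∑ c : ι,
        (Fmat p j k * (if a = c then 1 else 0)) * (if k = k' then N k c c' else 0))
        = Fmat p j k' * N k' a c'
    rw [Finset.sum_eq_single k' (fun k _ hk => Finset.sum_eq_zero fun c _ => by
        rw [if_neg hk, mul_zero]) (fun hj => absurd (Finset.mem_univ k') hj)]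
    rw [Finset.sum_eq_single a (fun c _ hc => by
        rw [if_neg (Ne.symm hc), mul_zero, zero_mul]) (fun hj => absurd (Finset.mem_univ a) hj)]
    rw [if_pos rfl, if_pos rfl, mul_one]
  rw [Matrix.mul_apply, Fintype.sum_prod_type]
  have h2 : ∀ (k' : Fin p) (c' : κ),
      ((Fmat p ⊗ₖ (1 : Matrix ι ι ℂ)) * bdiag N) (j, a) (k', c') *
        (Fmat p ⊗ₖ (1 : Matrix κ κ ℂ))ᴴ (k', c') (l, b)
      = (if b = c' then Fmat p j k' * star (Fmat p l k') * N k' a c' else 0) := by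
    intro k' c'
    rw [h1, Matrix.conjTranspose_apply]
    show _ * star (Fmat p l k' * (if b = c' then 1 else 0)) = _
    by_cases h : b = c'
    · rw [if_pos h, if_pos h, mul_one]
      ring
    · rw [if_neg h, if_neg h, mul_zero, star_zero, mul_zero]
  refine Finset.sum_congr rfl fun k' _ => ?_
  rw [Finset.sum_congr rfl fun c' _ => h2 k' c']
  rw [Finset.sum_ite_eq Finset.univ b fun c' => Fmat p j k' * star (Fmat p l k') * N k' a c']
  rw [if_pos (Finset.mem_univ b)]

lemma isBlockCirc_conj_bdiag (N : Fin p → Matrix ι κ ℂ) :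
    IsBlockCirc ((Fmat p ⊗ₖ (1 : Matrix ι ι ℂ)) * bdiag N * (Fmat p ⊗ₖ (1 : Matrix κ κ ℂ))ᴴ) := by
  intro t j l a b
  rw [conj_bdiag_apply, conj_bdiag_apply]
  refine Finset.sum_congr rfl fun k _ => ?_
  rw [Fmat_add_apply, Fmat_add_apply, star_mul']
  have hstar : star (((starRingEnd ℂ) (zeta p)) ^ (t.val * k.val)) = (zeta p) ^ (t.val * k.val) := by
    rw [← map_pow, Complex.star_def, Complex.conj_conj]
  rw [hstar]
  have hone : ((starRingEnd ℂ) (zeta p)) ^ (t.val * k.val) * (zeta p) ^ (t.val * k.val) = 1 := by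
    rw [← mul_pow, mul_comm, zeta_mul_conj, one_pow]
  calc ((starRingEnd ℂ) (zeta p)) ^ (t.val * k.val) * Fmat p j k *
        ((zeta p) ^ (t.val * k.val) * star (Fmat p l k)) * N k a b
      = (((starRingEnd ℂ) (zeta p)) ^ (t.val * k.val) * (zeta p) ^ (t.val * k.val)) *
        (Fmat p j k * star (Fmat p l k) * N k a b) := by ring
    _ = Fmat p j k * star (Fmat p l k) * N k a b := by rw [hone, one_mul]

lemma fblocks_eq_of {A : Tensor ι κ p} {D : Matrix (Fin p × ι) (Fin p × κ) ℂ}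
    (h : bcirc A = (Fmat p ⊗ₖ (1 : Matrix ι ι ℂ)) * D * (Fmat p ⊗ₖ (1 : Matrix κ κ ℂ))ᴴ) :
    fblocks A = D := by
  rw [fblocks, h, ← kron_one_conjTranspose, ← Matrix.mul_assoc, ← Matrix.mul_assoc,
    FI_conjTranspose_mul, Matrix.one_mul, Matrix.mul_assoc, FI_conjTranspose_mul,
    Matrix.mul_one]

lemma bcirc_eq_conj_fblocks (A : Tensor ι κ p) :
    bcirc A = (Fmat p ⊗ₖ (1 : Matrix ι ι ℂ)) * fblocks A * (Fmat p ⊗ₖ (1 : Matrix κ κ ℂ))ᴴ := by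
  rw [fblocks, ← kron_one_conjTranspose]
  simp only [← Matrix.mul_assoc]
  rw [FI_mul_conjTranspose, Matrix.one_mul, Matrix.mul_assoc, FI_mul_conjTranspose,
    Matrix.mul_one]

end FConj

section HatB
variable {ι κ : Type} [Fintype ι] [Fintype κ] [DecidableEq ι] [DecidableEq κ]

/-- Fourier-domain blocks of a tensor. -/
noncomputable def hatB (A : Tensor ι κ p) (j : Fin p) : Matrix ι κ ℂ :=
  ∑ t : Fin p, (zeta p) ^ (t.val * j.val) • A t

lemma Fmat_mul_star_Fmat (j l k : Fin p) :
    Fmat p j k * star (Fmat p l k)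
      = ((starRingEnd ℂ) (zeta p)) ^ (k.val * j.val) * (zeta p) ^ (k.val * l.val) * ((p:ℂ))⁻¹ := by
  have h2 : (starRingEnd ℂ) (((starRingEnd ℂ) (zeta p)) ^ (l.val * k.val) / (Real.sqrt p : ℂ))
      = (zeta p) ^ (l.val * k.val) / (Real.sqrt p : ℂ) := by
    rw [map_div₀, ← map_pow, Complex.conj_conj, Complex.conj_ofReal]
  rw [Fmat_apply, Fmat_apply, Complex.star_def, h2, div_mul_div_comm, sqrtp_sq,
    div_eq_mul_inv, mul_comm j.val k.val, mul_comm l.val k.val]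

lemma bcirc_eq_conj_bdiag_hatB (A : Tensor ι κ p) :
    bcirc A = (Fmat p ⊗ₖ (1 : Matrix ι ι ℂ)) * bdiag (hatB A) *
      (Fmat p ⊗ₖ (1 : Matrix κ κ ℂ))ᴴ := by
  ext x y
  obtain ⟨j, a⟩ := x; obtain ⟨l, b⟩ := y
  rw [conj_bdiag_apply]
  show A (j - l) a b = _
  have hentry : ∀ k, hatB A k a b = ∑ t : Fin p, (zeta p) ^ (t.val * k.val) * A t a b := by
    intro k
    rw [hatB, Matrix.sum_apply]
    exact Finset.sum_congr rfl fun t _ => by rw [Matrix.smul_apply, smul_eq_mul]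
  symm
  calc ∑ k : Fin p, Fmat p j k * star (Fmat p l k) * hatB A k a b
      = ∑ k : Fin p, ∑ t : Fin p,
          ((zeta p) ^ (k.val * (l + t).val) * ((starRingEnd ℂ) (zeta p)) ^ (k.val * j.val)) *
            ((p:ℂ))⁻¹ * A t a b := by
        refine Finset.sum_congr rfl fun k _ => ?_
        rw [hentry k, Fmat_mul_star_Fmat, Finset.mul_sum]
        refine Finset.sum_congr rfl fun t _ => ?_
        have hz : ((zeta p) ^ k.val) ^ p = 1 := by
          rw [← pow_mul, mul_comm, pow_mul, zeta_pow_p, one_pow]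
        have hpow : (zeta p) ^ (k.val * (l + t).val)
            = (zeta p) ^ (k.val * l.val) * (zeta p) ^ (k.val * t.val) := by
          rw [pow_mul, Fin.val_add, pow_val_mod _ hz, pow_add, ← pow_mul, ← pow_mul]
        conv_lhs => rw [mul_comm t.val k.val]
        rw [hpow]
        ring
    _ = ∑ t : Fin p, (∑ k : Fin p,
          (zeta p) ^ (k.val * (l + t).val) * ((starRingEnd ℂ) (zeta p)) ^ (k.val * j.val)) *
            ((p:ℂ))⁻¹ * A t a b := by
        rw [Finset.sum_comm]
        refine Finset.sum_congr rfl fun t _ => ?_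
        rw [Finset.sum_mul, Finset.sum_mul]
    _ = ∑ t : Fin p, (if l + t = j then (p:ℂ) else 0) * ((p:ℂ))⁻¹ * A t a b := by
        refine Finset.sum_congr rfl fun t _ => ?_
        rw [dft_sum (l + t) j]
    _ = A (j - l) a b := by
        rw [Finset.sum_eq_single (j - l) (fun t _ ht => by
          rw [if_neg (fun hc => ht (by rw [← hc, add_sub_cancel_left])), zero_mul, zero_mul])
          (fun hj => absurd (Finset.mem_univ _) hj)]
        rw [if_pos (by rw [add_comm, sub_add_cancel]), mul_inv_cancel₀ pcast_ne_zero, one_mul]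

lemma fblocks_eq_bdiag_hatB (A : Tensor ι κ p) : fblocks A = bdiag (hatB A) :=
  fblocks_eq_of (bcirc_eq_conj_bdiag_hatB A)

end HatB
end TProd


section MSVD

open scoped InnerProductSpace

variable {ι κ : Type} [Fintype ι] [Fintype κ] [DecidableEq ι] [DecidableEq κ]

theorem exists_msvd (M : Matrix ι κ ℂ) :
    ∃ t : Matrix ι ι ℂ × Matrix ι κ ℂ × Matrix κ κ ℂ, IsMSVD M t.1 t.2.1 t.2.2 := by
  classical
  have hH : (Mᴴ * M).IsHermitian := Matrix.isHermitian_conjTranspose_mul_self M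
  have hPSD : (Mᴴ * M).PosSemidef := Matrix.posSemidef_conjTranspose_mul_self M
  set V : Matrix κ κ ℂ := (hH.eigenvectorUnitary : Matrix κ κ ℂ) with hVdef
  have hV1 : Vᴴ * V = 1 := by
    rw [← Matrix.star_eq_conjTranspose]
    exact (Matrix.mem_unitaryGroup_iff').mp hH.eigenvectorUnitary.2
  have hV2 : V * Vᴴ = 1 := mul_eq_one_comm.mp hV1
  set lam : κ → ℝ := hH.eigenvalues with hlam
  have hlam0 : ∀ j, 0 ≤ lam j := fun j => hPSD.eigenvalues_nonneg j
  have hspec : Mᴴ * M = V * Matrix.diagonal (fun j => (lam j : ℂ)) * Vᴴ := by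
    have h := hH.spectral_theorem
    rw [Unitary.conjStarAlgAut_apply] at h
    exact h
  set B : Matrix ι κ ℂ := M * V with hBdef
  have hB : Bᴴ * B = Matrix.diagonal (fun j => (lam j : ℂ)) := by
    have h1 : Bᴴ * B = Vᴴ * (Mᴴ * M) * V := by
      rw [hBdef, Matrix.conjTranspose_mul]
      simp only [Matrix.mul_assoc]
    rw [h1, hspec]
    simp only [← Matrix.mul_assoc]
    rw [hV1, Matrix.one_mul, Matrix.mul_assoc, hV1, Matrix.mul_one]
  set sg : κ → ℝ := fun j => Real.sqrt (lam j) with hsg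
  set col : κ → EuclideanSpace ℂ ι := fun j => WithLp.toLp 2 (fun i => B i j) with hcol
  have hinner : ∀ j j', ⟪col j, col j'⟫_ℂ = if j = j' then (lam j : ℂ) else 0 := by
    intro j j'
    have h1 : ⟪col j, col j'⟫_ℂ = (Bᴴ * B) j j' := by
      rw [PiLp.inner_apply, Matrix.mul_apply]
      refine Finset.sum_congr rfl fun i _ => ?_
      rw [Matrix.conjTranspose_apply, RCLike.inner_apply, starRingEnd_apply, mul_comm]
    rw [h1, hB, Matrix.diagonal_apply]
  have hsgne : ∀ (j) (_ : lam j ≠ 0), (sg j : ℂ) ≠ 0 := by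
    intro j hj hc
    have hc' : Real.sqrt (lam j) = 0 := by exact_mod_cast hc
    have h2 := Real.sq_sqrt (hlam0 j)
    rw [hc'] at h2
    exact hj (by simpa using h2.symm)
  set w : {j : κ // lam j ≠ 0} → EuclideanSpace ℂ ι :=
    fun j => ((sg j.val : ℂ))⁻¹ • col j.val with hw
  have hworth : Orthonormal ℂ w := by
    rw [orthonormal_iff_ite]
    intro j j'
    rw [hw]
    dsimp only
    rw [inner_smul_left, inner_smul_right, hinner]
    by_cases h : j = j'
    · subst h
      rw [if_pos rfl, if_pos rfl, map_inv₀, Complex.conj_ofReal]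
      have h1 : (sg j.val : ℝ) * sg j.val = lam j.val := Real.mul_self_sqrt (hlam0 j.val)
      have h2 : (sg j.val : ℂ) ≠ 0 := hsgne j.val j.prop
      field_simp
      rw [← h1]
      push_cast
      ring
    · rw [if_neg (fun hc : j.val = j'.val => h (Subtype.ext hc)), if_neg h, mul_zero, mul_zero]
  have hcard : Fintype.card {j : κ // lam j ≠ 0} ≤ Fintype.card ι := by
    have hli := hworth.linearIndependent.fintype_card_le_finrank
    rwa [finrank_euclideanSpace] at hli
  obtain ⟨e⟩ := Function.Embedding.nonempty_of_card_le hcard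
  set v : ι → EuclideanSpace ℂ ι :=
    fun i => if h : ∃ j, e j = i then w h.choose else 0 with hv
  have hve : ∀ j, v (e j) = w j := by
    intro j
    have hex : ∃ j', e j' = e j := ⟨j, rfl⟩
    rw [hv]
    dsimp only
    rw [dif_pos hex]
    exact congrArg w (e.injective hex.choose_spec)
  have hvorth : Orthonormal ℂ ((Set.range e).restrict v) := by
    rw [orthonormal_iff_ite]
    rintro ⟨i, j, rfl⟩ ⟨i', j', rfl⟩
    change ⟪v (e j), v (e j')⟫_ℂ = _
    rw [hve j, hve j',
      orthonormal_iff_ite.mp hworth]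
    by_cases h : j = j'
    · subst h
      rw [if_pos rfl, if_pos rfl]
    · rw [if_neg h, if_neg (fun hc => h (e.injective (congrArg Subtype.val hc)))]
  obtain ⟨b, hb⟩ := hvorth.exists_orthonormalBasis_extension_of_card_eq
    (by rw [finrank_euclideanSpace])
  have hbe : ∀ j, b (e j) = w j := fun j => (hb (e j) ⟨j, rfl⟩).trans (hve j)
  set U : Matrix ι ι ℂ := Matrix.of (fun i i' => b i' i) with hUdef
  have hU1 : Uᴴ * U = 1 := by
    ext i i'
    rw [Matrix.mul_apply]
    have h1 : ∀ k, (Uᴴ) i k * U k i' = (starRingEnd ℂ) (b i k) * b i' k := fun k => rfl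
    rw [Finset.sum_congr rfl fun k _ => h1 k]
    have h2 : ∑ k, (starRingEnd ℂ) (b i k) * b i' k = ⟪b i, b i'⟫_ℂ := by
      rw [PiLp.inner_apply]
      exact Finset.sum_congr rfl fun k _ => by rw [RCLike.inner_apply, starRingEnd_apply, mul_comm]
    rw [h2, orthonormal_iff_ite.mp b.orthonormal i i', Matrix.one_apply]
  have hU2 : U * Uᴴ = 1 := mul_eq_one_comm.mp hU1
  set S : Matrix ι κ ℂ := Uᴴ * M * V with hSdef
  have hM : M = U * S * Vᴴ := by
    have h1 : U * (Uᴴ * M * V) * Vᴴ = (U * Uᴴ) * M * (V * Vᴴ) := by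
      simp only [Matrix.mul_assoc]
    rw [hSdef, h1, hU2, hV2, Matrix.one_mul, Matrix.mul_one]
  have hScol : ∀ i j, S i j = ⟪b i, col j⟫_ℂ := by
    intro i j
    have h1 : S = Uᴴ * B := by rw [hSdef, hBdef, Matrix.mul_assoc]
    rw [h1, Matrix.mul_apply, PiLp.inner_apply]
    exact Finset.sum_congr rfl fun k _ => by
      rw [RCLike.inner_apply, starRingEnd_apply]
      exact mul_comm _ _
  have hcol0 : ∀ j, lam j = 0 → col j = 0 := by
    intro j hj
    have h1 : ⟪col j, col j⟫_ℂ = 0 := by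
      rw [hinner, if_pos rfl, hj, Complex.ofReal_zero]
    exact inner_self_eq_zero.mp h1
  have hcolj : ∀ (j) (h : lam j ≠ 0), col j = (sg j : ℂ) • b (e ⟨j, h⟩) := by
    intro j h
    rw [hbe ⟨j, h⟩, hw]
    dsimp only
    rw [smul_smul, mul_inv_cancel₀ (hsgne j h), one_smul]
  have hSij : ∀ i j, S i j =
      if h : lam j ≠ 0 then (if i = e ⟨j, h⟩ then (sg j : ℂ) else 0) else 0 := by
    intro i j
    by_cases h : lam j ≠ 0
    · rw [dif_pos h, hScol, hcolj j h, inner_smul_right,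
        orthonormal_iff_ite.mp b.orthonormal]
      by_cases hie : i = e ⟨j, h⟩
      · rw [if_pos hie, if_pos hie, mul_one]
      · rw [if_neg hie, if_neg hie, mul_zero]
    · rw [dif_neg h, hScol, hcol0 j (not_not.mp h), inner_zero_right]
  have hnz : ∀ a c, S a c ≠ 0 → ∃ h : lam c ≠ 0, a = e ⟨c, h⟩ := by
    intro a c hac
    rw [hSij] at hac
    by_cases h : lam c ≠ 0
    · refine ⟨h, ?_⟩
      rw [dif_pos h] at hac
      by_cases hie : a = e ⟨c, h⟩
      · exact hie
      · rw [if_neg hie] at hac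
        exact absurd rfl hac
    · rw [dif_neg h] at hac
      exact absurd rfl hac
  refine ⟨(U, S, V), hU1, hU2, hV1, hV2, ⟨?_, ?_, ?_⟩, hM⟩
  · intro a c c' h1 h2
    obtain ⟨hl, he⟩ := hnz a c h1
    obtain ⟨hl', he'⟩ := hnz a c' h2
    have := e.injective (he ▸ he')
    exact congrArg Subtype.val this
  · intro a a' c h1 h2
    obtain ⟨hl, he⟩ := hnz a c h1
    obtain ⟨hl', he'⟩ := hnz a' c h2
    rw [he, he']
  · intro a c
    show 0 ≤ (S a c).re ∧ (S a c).im = 0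
    rw [hSij]
    by_cases h : lam c ≠ 0
    · rw [dif_pos h]
      by_cases hie : a = e ⟨c, h⟩
      · rw [if_pos hie]
        exact ⟨by rw [Complex.ofReal_re]; exact Real.sqrt_nonneg _, Complex.ofReal_im _⟩
      · rw [if_neg hie]
        exact ⟨le_of_eq rfl, rfl⟩
    · rw [dif_neg h]
      exact ⟨le_of_eq rfl, rfl⟩

end MSVD


section GMFWellDef
variable {ι κ : Type} [Fintype ι] [Fintype κ] [DecidableEq ι] [DecidableEq κ]

/-- Diagonal re-mapping of a square matrix. -/
noncomputable def dmap (h : ℂ → ℂ) {ι : Type} [DecidableEq ι] (M : Matrix ι ι ℂ) :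
    Matrix ι ι ℂ :=
  Matrix.of fun a b => if a = b then h (M a a) else 0

/-- The scalar function on squared singular values. -/
noncomputable def hfun (f : ℂ → ℂ) (z : ℂ) : ℂ :=
  if z = 0 then 0 else f ((Real.sqrt z.re : ℝ) : ℂ) / ((Real.sqrt z.re : ℝ) : ℂ)

lemma dmap_mul_apply (h : ℂ → ℂ) (M : Matrix ι ι ℂ) (N : Matrix ι κ ℂ) (a : ι) (b : κ) :
    (dmap h M * N) a b = h (M a a) * N a b := by
  rw [Matrix.mul_apply]
  rw [Finset.sum_eq_single a (fun c _ hc => by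
      show (if a = c then h (M a a) else 0) * N c b = 0
      rw [if_neg (fun hx => hc hx.symm), zero_mul])
    (fun hj => absurd (Finset.mem_univ a) hj)]
  show (if a = a then h (M a a) else 0) * N a b = _
  rw [if_pos rfl]

lemma mul_dmap_apply (h : ℂ → ℂ) (N : Matrix ι κ ℂ) (M : Matrix κ κ ℂ) (a : ι) (b : κ) :
    (N * dmap h M) a b = N a b * h (M b b) := by
  rw [Matrix.mul_apply]
  rw [Finset.sum_eq_single b (fun c _ hc => by
      show N a c * (if c = b then h (M c c) else 0) = 0
      rw [if_neg hc, mul_zero])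
    (fun hj => absurd (Finset.mem_univ b) hj)]
  show N a b * (if b = b then h (M b b) else 0) = _
  rw [if_pos rfl]

lemma map_eq_dmap_mul (f : ℂ → ℂ) (hf0 : f 0 = 0) (S : Matrix ι κ ℂ) (hS : IsRectDiag S) :
    S.map f = dmap (hfun f) (S * Sᴴ) * S := by
  ext a b
  rw [Matrix.map_apply, dmap_mul_apply]
  by_cases hz : S a b = 0
  · rw [hz, mul_zero, hf0]
  · have him := (hS.2.2 a b).2
    have hre := (hS.2.2 a b).1
    set r := (S a b).re with hr
    have hSab : S a b = (r : ℂ) := Complex.ext (Complex.ofReal_re r).symm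
      (by rw [him, Complex.ofReal_im])
    have hr0 : r ≠ 0 := fun hc => hz (by rw [hSab, hc, Complex.ofReal_zero])
    have hdiag : (S * Sᴴ) a a = ((r ^ 2 : ℝ) : ℂ) := by
      rw [Matrix.mul_apply]
      rw [Finset.sum_eq_single b (fun c _ hc => by
          have hc0 : S a c = 0 := by
            by_contra hcc
            exact hc (hS.1 a c b hcc hz)
          rw [Matrix.conjTranspose_apply, hc0, zero_mul])
        (fun hj => absurd (Finset.mem_univ b) hj)]
      rw [Matrix.conjTranspose_apply, hSab, Complex.star_def, Complex.conj_ofReal,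
        ← Complex.ofReal_mul, ← pow_two]
    rw [hdiag, hfun]
    have hr2 : ((r ^ 2 : ℝ) : ℂ) ≠ 0 := by
      rw [ne_eq, Complex.ofReal_eq_zero]
      exact pow_ne_zero 2 hr0
    rw [if_neg hr2, Complex.ofReal_re, Real.sqrt_sq hre, hSab]
    have hrc : (r : ℂ) ≠ 0 := fun hc => hr0 (Complex.ofReal_eq_zero.mp hc)
    rw [div_mul_cancel₀ _ hrc]

lemma dmap_mul_comm {ι' : Type} [Fintype ι'] [DecidableEq ι'] (h : ℂ → ℂ)
    (D₂ : Matrix ι ι ℂ) (D₁ : Matrix ι' ι' ℂ) (W : Matrix ι ι' ℂ)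
    (hD₂ : ∀ a a', a ≠ a' → D₂ a a' = 0) (hD₁ : ∀ a a', a ≠ a' → D₁ a a' = 0)
    (hcomm : D₂ * W = W * D₁) :
    dmap h D₂ * W = W * dmap h D₁ := by
  ext a b
  rw [dmap_mul_apply, mul_dmap_apply]
  by_cases hw : W a b = 0
  · rw [hw, mul_zero, zero_mul]
  · have hentry : D₂ a a * W a b = W a b * D₁ b b := by
      have h1 := congrFun (congrFun hcomm a) b
      rw [Matrix.mul_apply, Matrix.mul_apply] at h1
      rw [Finset.sum_eq_single a (fun c _ hc => by
          rw [hD₂ a c (Ne.symm hc), zero_mul])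
        (fun hj => absurd (Finset.mem_univ a) hj)] at h1
      rw [Finset.sum_eq_single b (fun c _ hc => by
          rw [hD₁ c b hc, mul_zero])
        (fun hj => absurd (Finset.mem_univ b) hj)] at h1
      exact h1
    have hDD : D₂ a a = D₁ b b := by
      have := hentry
      rw [mul_comm (W a b) (D₁ b b)] at this
      exact mul_right_cancel₀ hw this
    rw [hDD, mul_comm]

lemma rectdiag_selfmul_diag (S : Matrix ι κ ℂ) (hS : IsRectDiag S) :
    ∀ a a', a ≠ a' → (S * Sᴴ) a a' = 0 := by
  intro a a' ha
  rw [Matrix.mul_apply]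
  apply Finset.sum_eq_zero
  intro c _
  rw [Matrix.conjTranspose_apply]
  by_cases h1 : S a c = 0
  · rw [h1, zero_mul]
  · by_cases h2 : S a' c = 0
    · rw [h2, star_zero, mul_zero]
    · exact absurd (hS.2.1 a a' c h1 h2) ha

lemma gmf_welldef (f : ℂ → ℂ) (hf0 : f 0 = 0) {M : Matrix ι κ ℂ}
    {U₁ U₂ : Matrix ι ι ℂ} {S₁ S₂ : Matrix ι κ ℂ} {V₁ V₂ : Matrix κ κ ℂ}
    (h₁ : IsMSVD M U₁ S₁ V₁) (h₂ : IsMSVD M U₂ S₂ V₂) :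
    U₁ * (S₁.map f) * V₁ᴴ = U₂ * (S₂.map f) * V₂ᴴ := by
  obtain ⟨hU₁1, hU₁2, hV₁1, hV₁2, hS₁, hM₁⟩ := h₁
  obtain ⟨hU₂1, hU₂2, hV₂1, hV₂2, hS₂, hM₂⟩ := h₂
  set W : Matrix ι ι ℂ := U₂ᴴ * U₁ with hW
  set X : Matrix κ κ ℂ := V₂ᴴ * V₁ with hX
  have hSX : S₂ * X = W * S₁ := by
    have h1 : U₂ * (S₂ * X) = U₂ * (W * S₁) := by
      rw [hW, hX]
      calc U₂ * (S₂ * (V₂ᴴ * V₁)) = (U₂ * S₂ * V₂ᴴ) * V₁ := by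
            simp only [Matrix.mul_assoc]
        _ = (U₁ * S₁ * V₁ᴴ) * V₁ := by rw [← hM₂, ← hM₁]
        _ = U₁ * S₁ * (V₁ᴴ * V₁) := by simp only [Matrix.mul_assoc]
        _ = U₂ * (U₂ᴴ * U₁ * S₁) := by
            rw [hV₁1, Matrix.mul_one]
            simp only [← Matrix.mul_assoc]
            rw [hU₂2, Matrix.one_mul]
    have h2 := congrArg (fun Z => U₂ᴴ * Z) h1
    simp only [← Matrix.mul_assoc] at h2
    rw [hU₂1, Matrix.one_mul, Matrix.one_mul] at h2
    rw [hW]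
    exact h2
  have hXX : X * Xᴴ = 1 := by
    rw [hX, Matrix.conjTranspose_mul, Matrix.conjTranspose_conjTranspose]
    calc V₂ᴴ * V₁ * (V₁ᴴ * V₂) = V₂ᴴ * (V₁ * V₁ᴴ) * V₂ := by simp only [Matrix.mul_assoc]
      _ = 1 := by rw [hV₁2, Matrix.mul_one, hV₂1]
  have hWW : Wᴴ * W = 1 := by
    rw [hW, Matrix.conjTranspose_mul, Matrix.conjTranspose_conjTranspose]
    calc U₁ᴴ * U₂ * (U₂ᴴ * U₁) = U₁ᴴ * (U₂ * U₂ᴴ) * U₁ := by simp only [Matrix.mul_assoc]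
      _ = 1 := by rw [hU₂2, Matrix.mul_one, hU₁1]
  have hS₁X : S₁ * Xᴴ = Wᴴ * S₂ := by
    calc S₁ * Xᴴ = (Wᴴ * W) * S₁ * Xᴴ := by rw [hWW, Matrix.one_mul]
      _ = Wᴴ * (W * S₁ * Xᴴ) := by simp only [Matrix.mul_assoc]
      _ = Wᴴ * (S₂ * X * Xᴴ) := by rw [← hSX]
      _ = Wᴴ * (S₂ * (X * Xᴴ)) := by simp only [Matrix.mul_assoc]
      _ = Wᴴ * S₂ := by rw [hXX, Matrix.mul_one]
  have hXS : X * S₁ᴴ = S₂ᴴ * W := by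
    have h3 := congrArg Matrix.conjTranspose hS₁X
    simp only [Matrix.conjTranspose_mul, Matrix.conjTranspose_conjTranspose] at h3
    exact h3
  have hcomm : (S₂ * S₂ᴴ) * W = W * (S₁ * S₁ᴴ) := by
    calc S₂ * S₂ᴴ * W = S₂ * (S₂ᴴ * W) := by simp only [Matrix.mul_assoc]
      _ = S₂ * (X * S₁ᴴ) := by rw [← hXS]
      _ = (S₂ * X) * S₁ᴴ := by simp only [Matrix.mul_assoc]
      _ = W * S₁ * S₁ᴴ := by rw [hSX]
      _ = W * (S₁ * S₁ᴴ) := by simp only [Matrix.mul_assoc]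
  have hkey : (S₂.map f) * X = W * (S₁.map f) := by
    rw [map_eq_dmap_mul f hf0 S₂ hS₂, map_eq_dmap_mul f hf0 S₁ hS₁]
    calc dmap (hfun f) (S₂ * S₂ᴴ) * S₂ * X
        = dmap (hfun f) (S₂ * S₂ᴴ) * (S₂ * X) := by simp only [Matrix.mul_assoc]
      _ = dmap (hfun f) (S₂ * S₂ᴴ) * (W * S₁) := by rw [hSX]
      _ = (dmap (hfun f) (S₂ * S₂ᴴ) * W) * S₁ := by simp only [Matrix.mul_assoc]
      _ = (W * dmap (hfun f) (S₁ * S₁ᴴ)) * S₁ := by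
          rw [dmap_mul_comm (hfun f) _ _ W (rectdiag_selfmul_diag S₂ hS₂)
            (rectdiag_selfmul_diag S₁ hS₁) hcomm]
      _ = W * (dmap (hfun f) (S₁ * S₁ᴴ) * S₁) := by simp only [Matrix.mul_assoc]
  have hfin : U₂ * (S₂.map f) * V₂ᴴ = U₁ * (S₁.map f) * V₁ᴴ := by
    calc U₂ * (S₂.map f) * V₂ᴴ
        = U₂ * ((S₂.map f) * X) * V₁ᴴ := by
          rw [hX]
          simp only [← Matrix.mul_assoc]
          rw [Matrix.mul_assoc _ V₁ V₁ᴴ, hV₁2, Matrix.mul_one]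
      _ = U₂ * (W * (S₁.map f)) * V₁ᴴ := by rw [hkey]
      _ = U₁ * (S₁.map f) * V₁ᴴ := by
          rw [hW]
          simp only [← Matrix.mul_assoc]
          rw [hU₂2, Matrix.one_mul]
  exact hfin.symm

end GMFWellDef


section TSVDExist
variable {p : ℕ} [NeZero p] {ι κ μ : Type} [Fintype ι] [Fintype κ] [Fintype μ]
  [DecidableEq ι] [DecidableEq κ] [DecidableEq μ]

lemma FI_Hmul_cancel {Z : Type} [Fintype Z] (X : Matrix (Fin p × κ) Z ℂ) :
    (Fmat p ⊗ₖ (1 : Matrix κ κ ℂ))ᴴ * ((Fmat p ⊗ₖ (1 : Matrix κ κ ℂ)) * X) = X := by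
  rw [← Matrix.mul_assoc, FI_conjTranspose_mul, Matrix.one_mul]

lemma conj_bdiag_conjT (N : Fin p → Matrix ι κ ℂ) :
    ((Fmat p ⊗ₖ (1 : Matrix ι ι ℂ)) * bdiag N * (Fmat p ⊗ₖ (1 : Matrix κ κ ℂ))ᴴ)ᴴ
      = (Fmat p ⊗ₖ (1 : Matrix κ κ ℂ)) * bdiag (fun j => (N j)ᴴ) *
        (Fmat p ⊗ₖ (1 : Matrix ι ι ℂ))ᴴ := by
  simp only [Matrix.conjTranspose_mul, Matrix.conjTranspose_conjTranspose,
    bdiag_conjTranspose, Matrix.mul_assoc]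

lemma conj_bdiag_mul (N : Fin p → Matrix ι κ ℂ) (N' : Fin p → Matrix κ μ ℂ) :
    ((Fmat p ⊗ₖ (1 : Matrix ι ι ℂ)) * bdiag N * (Fmat p ⊗ₖ (1 : Matrix κ κ ℂ))ᴴ) *
      ((Fmat p ⊗ₖ (1 : Matrix κ κ ℂ)) * bdiag N' * (Fmat p ⊗ₖ (1 : Matrix μ μ ℂ))ᴴ)
    = (Fmat p ⊗ₖ (1 : Matrix ι ι ℂ)) * bdiag (fun j => N j * N' j) *
        (Fmat p ⊗ₖ (1 : Matrix μ μ ℂ))ᴴ := by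
  rw [← bdiag_mul]
  simp only [Matrix.mul_assoc]
  rw [FI_Hmul_cancel]

lemma mul_unitary_unitary {Z : Type} [Fintype Z] [DecidableEq Z] {A B : Matrix Z Z ℂ}
    (hA : Aᴴ * A = 1) (hB : Bᴴ * B = 1) : (A * B)ᴴ * (A * B) = 1 := by
  rw [Matrix.conjTranspose_mul]
  calc Bᴴ * Aᴴ * (A * B) = Bᴴ * (Aᴴ * A) * B := by simp only [Matrix.mul_assoc]
    _ = 1 := by rw [hA, Matrix.mul_one, hB]

lemma bcirc_tconjT_mul_self {Q : Tensor ι ι p} (hQ : IsTUnitary Q) :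
    (bcirc Q)ᴴ * bcirc Q = 1 := by
  rw [← bcirc_tconjT, ← bcirc_tprod, hQ.1, bcirc_tid]

theorem exists_tsvd (A : Tensor ι κ p) :
    ∃ t : Tensor ι ι p × Tensor ι κ p × Tensor κ κ p, IsTSVD A t.1 t.2.1 t.2.2 := by
  classical
  choose t hsvd using fun j : Fin p => exists_msvd (hatB A j)
  set UU : Fin p → Matrix ι ι ℂ := fun j => (t j).1 with hUU
  set SS : Fin p → Matrix ι κ ℂ := fun j => (t j).2.1 with hSS
  set VV : Fin p → Matrix κ κ ℂ := fun j => (t j).2.2 with hVV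
  set U : Tensor ι ι p := bcircInv ((Fmat p ⊗ₖ (1 : Matrix ι ι ℂ)) * bdiag UU *
    (Fmat p ⊗ₖ (1 : Matrix ι ι ℂ))ᴴ) with hUdef
  set S : Tensor ι κ p := bcircInv ((Fmat p ⊗ₖ (1 : Matrix ι ι ℂ)) * bdiag SS *
    (Fmat p ⊗ₖ (1 : Matrix κ κ ℂ))ᴴ) with hSdef
  set V : Tensor κ κ p := bcircInv ((Fmat p ⊗ₖ (1 : Matrix κ κ ℂ)) * bdiag VV *
    (Fmat p ⊗ₖ (1 : Matrix κ κ ℂ))ᴴ) with hVdef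
  have hbU : bcirc U = (Fmat p ⊗ₖ (1 : Matrix ι ι ℂ)) * bdiag UU *
      (Fmat p ⊗ₖ (1 : Matrix ι ι ℂ))ᴴ := by
    rw [hUdef]; exact bcirc_bcircInv (isBlockCirc_conj_bdiag UU)
  have hbS : bcirc S = (Fmat p ⊗ₖ (1 : Matrix ι ι ℂ)) * bdiag SS *
      (Fmat p ⊗ₖ (1 : Matrix κ κ ℂ))ᴴ := by
    rw [hSdef]; exact bcirc_bcircInv (isBlockCirc_conj_bdiag SS)
  have hbV : bcirc V = (Fmat p ⊗ₖ (1 : Matrix κ κ ℂ)) * bdiag VV *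
      (Fmat p ⊗ₖ (1 : Matrix κ κ ℂ))ᴴ := by
    rw [hVdef]; exact bcirc_bcircInv (isBlockCirc_conj_bdiag VV)
  have hfbS : fblocks S = bdiag SS := fblocks_eq_of hbS
  refine ⟨(U, S, V), ⟨?_, ?_⟩, ⟨?_, ?_⟩, ⟨?_, ?_, ?_, ?_⟩, ?_⟩
  · apply bcirc_inj
    rw [bcirc_tprod, bcirc_tconjT, bcirc_tid, hbU, conj_bdiag_conjT, conj_bdiag_mul]
    have h1 : (fun j => (UU j)ᴴ * UU j) = fun _ : Fin p => (1 : Matrix ι ι ℂ) :=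
      funext fun j => (hsvd j).1
    rw [h1, bdiag_one, Matrix.mul_one, FI_mul_conjTranspose]
  · apply bcirc_inj
    rw [bcirc_tprod, bcirc_tconjT, bcirc_tid, hbU, conj_bdiag_conjT, conj_bdiag_mul]
    have h1 : (fun j => UU j * (UU j)ᴴ) = fun _ : Fin p => (1 : Matrix ι ι ℂ) :=
      funext fun j => (hsvd j).2.1
    rw [h1, bdiag_one, Matrix.mul_one, FI_mul_conjTranspose]
  · apply bcirc_inj
    rw [bcirc_tprod, bcirc_tconjT, bcirc_tid, hbV, conj_bdiag_conjT, conj_bdiag_mul]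
    have h1 : (fun j => (VV j)ᴴ * VV j) = fun _ : Fin p => (1 : Matrix κ κ ℂ) :=
      funext fun j => (hsvd j).2.2.1
    rw [h1, bdiag_one, Matrix.mul_one, FI_mul_conjTranspose]
  · apply bcirc_inj
    rw [bcirc_tprod, bcirc_tconjT, bcirc_tid, hbV, conj_bdiag_conjT, conj_bdiag_mul]
    have h1 : (fun j => VV j * (VV j)ᴴ) = fun _ : Fin p => (1 : Matrix κ κ ℂ) :=
      funext fun j => (hsvd j).2.2.2.1
    rw [h1, bdiag_one, Matrix.mul_one, FI_mul_conjTranspose]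
  · intro i j a b hne
    by_contra hij
    exact hne (by rw [hfbS]; exact if_neg hij)
  · intro x y y' h h'
    rw [hfbS] at h h'
    have hxy : x.1 = y.1 := by
      by_contra h0
      exact h (if_neg h0)
    have hxy' : x.1 = y'.1 := by
      by_contra h0
      exact h' (if_neg h0)
    have h2 : SS x.1 x.2 y.2 ≠ 0 := by
      intro hc
      exact h (by show (if x.1 = y.1 then SS x.1 x.2 y.2 else 0) = 0; rw [if_pos hxy, hc])
    have h2' : SS x.1 x.2 y'.2 ≠ 0 := by
      intro hc
      exact h' (by show (if x.1 = y'.1 then SS x.1 x.2 y'.2 else 0) = 0; rw [if_pos hxy', hc])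
    have h3 := (hsvd x.1).2.2.2.2.1.1 x.2 y.2 y'.2 h2 h2'
    exact Prod.ext_iff.mpr ⟨hxy ▸ hxy'.symm ▸ rfl, h3⟩
  · intro x x' y h h'
    rw [hfbS] at h h'
    have hxy : x.1 = y.1 := by
      by_contra h0
      exact h (if_neg h0)
    have hxy' : x'.1 = y.1 := by
      by_contra h0
      exact h' (if_neg h0)
    have h2 : SS x.1 x.2 y.2 ≠ 0 := by
      intro hc
      exact h (by show (if x.1 = y.1 then SS x.1 x.2 y.2 else 0) = 0; rw [if_pos hxy, hc])
    have h2' : SS x'.1 x'.2 y.2 ≠ 0 := by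
      intro hc
      exact h' (by show (if x'.1 = y.1 then SS x'.1 x'.2 y.2 else 0) = 0; rw [if_pos hxy', hc])
    have h3 : SS y.1 x.2 y.2 ≠ 0 := by rw [← hxy]; exact h2
    have h3' : SS y.1 x'.2 y.2 ≠ 0 := by rw [← hxy']; exact h2'
    have h4 := (hsvd y.1).2.2.2.2.1.2.1 x.2 x'.2 y.2 h3 h3'
    exact Prod.ext_iff.mpr ⟨hxy.trans hxy'.symm, h4⟩
  · intro x y
    rw [hfbS]
    show 0 ≤ ((if x.1 = y.1 then SS x.1 x.2 y.2 else 0) : ℂ).re ∧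
      ((if x.1 = y.1 then SS x.1 x.2 y.2 else 0) : ℂ).im = 0
    by_cases h : x.1 = y.1
    · rw [if_pos h]
      exact (hsvd x.1).2.2.2.2.1.2.2 x.2 y.2
    · rw [if_neg h]
      exact ⟨le_of_eq rfl, rfl⟩
  · apply bcirc_inj
    rw [bcirc_tprod, bcirc_tprod, bcirc_tconjT, hbU, hbS, hbV, conj_bdiag_conjT,
      conj_bdiag_mul, conj_bdiag_mul, bcirc_eq_conj_bdiag_hatB A]
    have h1 : hatB A = fun j => UU j * (SS j * (VV j)ᴴ) := by
      funext j
      rw [← Matrix.mul_assoc]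
      exact (hsvd j).2.2.2.2.2
    rw [h1]

end TSVDExist

section Assembly
variable {p : ℕ} [NeZero p] {ι κ : Type} [Fintype ι] [Fintype κ] [DecidableEq ι] [DecidableEq κ]

lemma bdiag_map {f : ℂ → ℂ} (hf0 : f 0 = 0) (N : Fin p → Matrix ι κ ℂ) :
    (bdiag N).map f = bdiag (fun j => (N j).map f) := by
  ext x y
  show f (if x.1 = y.1 then N x.1 x.2 y.2 else 0) = if x.1 = y.1 then f (N x.1 x.2 y.2) else 0
  by_cases h : x.1 = y.1
  · rw [if_pos h, if_pos h]
  · rw [if_neg h, if_neg h, hf0]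

lemma gmf_eq_of_isMSVD {f : ℂ → ℂ} (hf0 : f 0 = 0) {M : Matrix ι κ ℂ}
    {U : Matrix ι ι ℂ} {S : Matrix ι κ ℂ} {V : Matrix κ κ ℂ} (h : IsMSVD M U S V) :
    gmf f M = U * (S.map f) * Vᴴ := by
  have hex : ∃ t : Matrix ι ι ℂ × Matrix ι κ ℂ × Matrix κ κ ℂ,
      IsMSVD M t.1 t.2.1 t.2.2 := ⟨(U, S, V), h⟩
  rw [gmf, dif_pos hex]
  exact gmf_welldef f hf0 hex.choose_spec h

end Assembly

/-- the `bcirc` operator intertwines the generalized matrix function and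
the generalized tensor function: `f^◇(bcirc A) = bcirc (f^◇(A))` for odd `f`. -/
theorem gmf_bcirc_comm {m n p : ℕ} [NeZero p] (f : ℂ → ℂ) (hf : OddFn f)
    (A : Tensor (Fin m) (Fin n) p) :
    gmf f (bcirc A) = bcirc (gtf f A) := by
  have hf0 : f 0 = 0 := by
    have h := hf 0
    rw [neg_zero] at h
    linear_combination h / 2
  have hex := exists_tsvd A
  rw [gtf, dif_pos hex]
  obtain ⟨hU, hV, hS, hA⟩ := hex.choose_spec
  set U := hex.choose.1 with hU'
  set S := hex.choose.2.1 with hS'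
  set V := hex.choose.2.2 with hV'
  have hbUU : (bcirc U)ᴴ * bcirc U = 1 := bcirc_tconjT_mul_self hU
  have hbVV : (bcirc V)ᴴ * bcirc V = 1 := bcirc_tconjT_mul_self hV
  have hbA : bcirc A = (bcirc U * (Fmat p ⊗ₖ (1 : Matrix (Fin m) (Fin m) ℂ))) * fblocks S *
      (bcirc V * (Fmat p ⊗ₖ (1 : Matrix (Fin n) (Fin n) ℂ)))ᴴ := by
    conv_lhs => rw [hA]
    rw [bcirc_tprod, bcirc_tprod, bcirc_tconjT, bcirc_eq_conj_fblocks S,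
      Matrix.conjTranspose_mul]
    simp only [Matrix.mul_assoc]
  have hMSVD : IsMSVD (bcirc A)
      (bcirc U * (Fmat p ⊗ₖ (1 : Matrix (Fin m) (Fin m) ℂ))) (fblocks S)
      (bcirc V * (Fmat p ⊗ₖ (1 : Matrix (Fin n) (Fin n) ℂ))) :=
    ⟨mul_unitary_unitary hbUU FI_conjTranspose_mul,
     mul_eq_one_comm.mp (mul_unitary_unitary hbUU FI_conjTranspose_mul),
     mul_unitary_unitary hbVV FI_conjTranspose_mul,
     mul_eq_one_comm.mp (mul_unitary_unitary hbVV FI_conjTranspose_mul),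
     ⟨hS.2.1, hS.2.2.1, hS.2.2.2⟩, hbA⟩
  have hfhat : bcirc (fhat f S) = (Fmat p ⊗ₖ (1 : Matrix (Fin m) (Fin m) ℂ)) *
      bdiag (fun j => (hatB S j).map f) *
      (Fmat p ⊗ₖ (1 : Matrix (Fin n) (Fin n) ℂ))ᴴ := by
    rw [fhat, fblocks_eq_bdiag_hatB S, bdiag_map hf0, ← kron_one_conjTranspose]
    exact bcirc_bcircInv (isBlockCirc_conj_bdiag _)
  rw [gmf_eq_of_isMSVD hf0 hMSVD, fblocks_eq_bdiag_hatB S, bdiag_map hf0]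
  rw [bcirc_tprod, bcirc_tprod, bcirc_tconjT, hfhat, Matrix.conjTranspose_mul]
  simp only [Matrix.mul_assoc]
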